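/- For probability distributions P1, P2 on a finite alphabet X and any α with 0 < α < 1, the Rényi divergence satisfies D_α(P1‖P2) = min over all probability distributions Q with support contained in the support of P1 of [ (α/(1−α))·D(Q‖P1) + D(Q‖P2) ]. -/

import Mathlib

open scoped Classical BigOperators

noncomputable def shannonEntropy {X : Type*} [Fintype X] (Q : X → ℝ) : ℝ :=
  -∑ x, Q x * Real.log (Q x)

noncomputable def klDiv {X : Type*} [Fintype X] (Q P : X → ℝ) : EReal :=
  if ∀ x, 0 < Q x → 0 < P x then
    ((∑ x, Q x * Real.log (Q x / P x) : ℝ) : EReal)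
  else ⊤

noncomputable def renyiEntropy {X : Type*} [Fintype X] (α : ℝ) (P : X → ℝ) : ℝ :=
  (1 / (1 - α)) * Real.log (∑ x, P x ^ α)

noncomputable def renyiDiv {X : Type*} [Fintype X] (α : ℝ) (P1 P2 : X → ℝ) : EReal :=
  if 1 < α ∧ ¬ (∀ x, 0 < P1 x → 0 < P2 x) then ⊤
  else if ∀ x, ¬ (0 < P1 x ∧ 0 < P2 x) then ⊤
  else ((1 / (α - 1)) *
      Real.log (∑ x, if 0 < P1 x ∧ 0 < P2 x then P1 x ^ α * P2 x ^ (1 - α) else 0) : ℝ)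

def IsPMF {X : Type*} [Fintype X] (P : X → ℝ) : Prop :=
  (∀ x, 0 ≤ P x) ∧ ∑ x, P x = 1

theorem renyi_div_char_lt_one {X : Type*} [Fintype X] (P1 P2 : X → ℝ)
    (hP1 : IsPMF P1) (hP2 : IsPMF P2) (α : ℝ) (hα0 : 0 < α) (hα1 : α < 1) :
    IsLeast {v : EReal | ∃ Q : X → ℝ, IsPMF Q ∧ (∀ x, 0 < Q x → 0 < P1 x) ∧
        v = ((α / (1 - α) : ℝ) : EReal) * klDiv Q P1 + klDiv Q P2}
      (renyiDiv α P1 P2) := by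
  classical
  have h1α : (0:ℝ) < 1 - α := by linarith
  set c : ℝ := α / (1 - α) with hc
  set R : X → ℝ := fun x => P1 x ^ α * P2 x ^ (1 - α) with hR
  set Z : ℝ := ∑ x, if 0 < P1 x ∧ 0 < P2 x then R x else 0 with hZ
  have hcond1 : ¬ (1 < α ∧ ¬ (∀ x, 0 < P1 x → 0 < P2 x)) := by
    rintro ⟨h, -⟩; linarith
  by_cases hS : ∀ x, ¬ (0 < P1 x ∧ 0 < P2 x)
  · -- degenerate case: Rényi divergence is ⊤
    have hr : renyiDiv α P1 P2 = ⊤ := by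
      unfold renyiDiv; rw [if_neg hcond1, if_pos hS]
    rw [hr]
    have hx : ∃ x, 0 < P1 x := by
      by_contra h
      push_neg at h
      have : ∑ x, P1 x = 0 :=
        Finset.sum_eq_zero fun x _ => le_antisymm (h x) (hP1.1 x)
      rw [hP1.2] at this; norm_num at this
    constructor
    · refine ⟨P1, hP1, fun x h => h, ?_⟩
      have h1 : klDiv P1 P1 = ((0:ℝ) : EReal) := by
        unfold klDiv
        rw [if_pos (fun x h => h)]
        norm_num
      have h2 : klDiv P1 P2 = ⊤ := by
        unfold klDiv
        rw [if_neg]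
        push_neg
        obtain ⟨x, hx⟩ := hx
        exact ⟨x, hx, le_of_not_gt fun h2 => hS x ⟨hx, h2⟩⟩
      rw [h1, h2, ← EReal.coe_mul, mul_zero, EReal.coe_add_top]
    · rintro v ⟨Q, hQ, hQ1, rfl⟩
      obtain ⟨x0, hx0⟩ : ∃ x, 0 < Q x := by
        by_contra h
        push_neg at h
        have : ∑ x, Q x = 0 :=
          Finset.sum_eq_zero fun x _ => le_antisymm (h x) (hQ.1 x)
        rw [hQ.2] at this; norm_num at this
      have h2 : klDiv Q P2 = ⊤ := by
        unfold klDiv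
        rw [if_neg]
        push_neg
        exact ⟨x0, hx0, le_of_not_gt fun h2 => hS x0 ⟨hQ1 x0 hx0, h2⟩⟩
      have h1 : klDiv Q P1 = ((∑ x, Q x * Real.log (Q x / P1 x) : ℝ) : EReal) := by
        unfold klDiv; rw [if_pos hQ1]
      rw [h1, h2, ← EReal.coe_mul, EReal.coe_add_top]
  · -- main case
    push_neg at hS
    obtain ⟨x0, hx0⟩ := hS
    have hRnn : ∀ x, 0 ≤ (if 0 < P1 x ∧ 0 < P2 x then R x else 0) := by
      intro x
      split_ifs with h
      · have := h.1; have := h.2; rw [hR]; positivity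
      · exact le_refl 0
    have hZpos : 0 < Z := by
      rw [hZ]
      refine Finset.sum_pos' (fun x _ => hRnn x) ⟨x0, Finset.mem_univ x0, ?_⟩
      rw [if_pos hx0]
      have := hx0.1; have := hx0.2; rw [hR]; positivity
    have hr : renyiDiv α P1 P2 = (((1 / (α - 1)) * Real.log Z : ℝ) : EReal) := by
      unfold renyiDiv
      rw [if_neg hcond1, if_neg (by push_neg; exact ⟨x0, hx0⟩)]
    -- key identity
    have key : ∀ Q : X → ℝ, IsPMF Q → (∀ x, 0 < Q x → 0 < P1 x) →
        (∀ x, 0 < Q x → 0 < P2 x) →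
        c * (∑ x, Q x * Real.log (Q x / P1 x)) + (∑ x, Q x * Real.log (Q x / P2 x)) =
          (1 / (1 - α)) * ∑ x, Q x * Real.log (Q x / R x) := by
      intro Q hQ hQ1 hQ2
      rw [Finset.mul_sum, Finset.mul_sum, ← Finset.sum_add_distrib]
      refine Finset.sum_congr rfl fun x _ => ?_
      rcases lt_or_eq_of_le (hQ.1 x) with hq | hq
      · have hp1 := hQ1 x hq
        have hp2 := hQ2 x hq
        rw [hR]
        rw [Real.log_div hq.ne' hp1.ne', Real.log_div hq.ne' hp2.ne',
          Real.log_div hq.ne' (by positivity),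
          Real.log_mul (by positivity) (by positivity),
          Real.log_rpow hp1, Real.log_rpow hp2, hc]
        field_simp
        ring
      · rw [← hq]; ring
    -- Gibbs-type lower bound
    have gibbs : ∀ Q : X → ℝ, IsPMF Q → (∀ x, 0 < Q x → 0 < P1 x) →
        (∀ x, 0 < Q x → 0 < P2 x) →
        - Real.log Z ≤ ∑ x, Q x * Real.log (Q x / R x) := by
      intro Q hQ hQ1 hQ2
      have hpt : ∀ x, Q x - (if 0 < P1 x ∧ 0 < P2 x then R x else 0) / Z ≤
          Q x * Real.log (Q x / R x) + Q x * Real.log Z := by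
        intro x
        rcases lt_or_eq_of_le (hQ.1 x) with hq | hq
        · have hp1 := hQ1 x hq
          have hp2 := hQ2 x hq
          have hRx : 0 < R x := by rw [hR]; positivity
          rw [if_pos ⟨hp1, hp2⟩]
          have hlog : Real.log (R x / (Q x * Z)) ≤ R x / (Q x * Z) - 1 :=
            Real.log_le_sub_one_of_pos (by positivity)
          have h2 : Q x * Real.log (R x / (Q x * Z)) ≤ R x / Z - Q x := by
            have := mul_le_mul_of_nonneg_left hlog (le_of_lt hq)
            calc Q x * Real.log (R x / (Q x * Z)) ≤ Q x * (R x / (Q x * Z) - 1) := this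
              _ = R x / Z - Q x := by field_simp
          have heq : Q x * Real.log (R x / (Q x * Z)) =
              -(Q x * Real.log (Q x / R x) + Q x * Real.log Z) := by
            rw [Real.log_div hRx.ne' (by positivity), Real.log_mul hq.ne' hZpos.ne',
              Real.log_div hq.ne' hRx.ne']
            ring
          rw [heq] at h2
          linarith
        · rw [← hq]
          simp only [zero_mul, zero_sub, add_zero, zero_add]
          have := hRnn x
          have : 0 ≤ (if 0 < P1 x ∧ 0 < P2 x then R x else 0) / Z := by positivity
          linarith
      have hsum := Finset.sum_le_sum fun x (_ : x ∈ Finset.univ) => hpt x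
      rw [Finset.sum_sub_distrib, Finset.sum_add_distrib, ← Finset.sum_div, ← hZ,
        div_self hZpos.ne', hQ.2, ← Finset.sum_mul, hQ.2, one_mul] at hsum
      linarith
    rw [hr]
    constructor
    · -- membership: optimal Q
      set Qs : X → ℝ := fun x => if 0 < P1 x ∧ 0 < P2 x then R x / Z else 0 with hQs
      have hQsnn : ∀ x, 0 ≤ Qs x := by
        intro x
        show 0 ≤ if 0 < P1 x ∧ 0 < P2 x then R x / Z else 0
        split_ifs with h
        · have := hRnn x; rw [if_pos h] at this; positivity
        · exact le_refl 0
      have hQssum : ∑ x, Qs x = 1 := by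
        rw [hQs]
        have : ∀ x ∈ Finset.univ, (if 0 < P1 x ∧ 0 < P2 x then R x / Z else 0) =
            (if 0 < P1 x ∧ 0 < P2 x then R x else 0) / Z := by
          intro x _
          split_ifs with h
          · rfl
          · rw [zero_div]
        rw [Finset.sum_congr rfl this, ← Finset.sum_div, ← hZ, div_self hZpos.ne']
      have hQsS : ∀ x, 0 < Qs x → 0 < P1 x ∧ 0 < P2 x := by
        intro x h
        by_contra hcon
        have : Qs x = 0 := by simp only [hQs]; rw [if_neg hcon]
        rw [this] at h
        exact lt_irrefl 0 h
      have hQs1 : ∀ x, 0 < Qs x → 0 < P1 x := fun x h => (hQsS x h).1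
      have hQs2 : ∀ x, 0 < Qs x → 0 < P2 x := fun x h => (hQsS x h).2
      have hQsPMF : IsPMF Qs := ⟨hQsnn, hQssum⟩
      refine ⟨Qs, hQsPMF, hQs1, ?_⟩
      have h1 : klDiv Qs P1 = ((∑ x, Qs x * Real.log (Qs x / P1 x) : ℝ) : EReal) := by
        unfold klDiv; rw [if_pos hQs1]
      have h2 : klDiv Qs P2 = ((∑ x, Qs x * Real.log (Qs x / P2 x) : ℝ) : EReal) := by
        unfold klDiv; rw [if_pos hQs2]
      rw [h1, h2, ← EReal.coe_mul, ← EReal.coe_add, EReal.coe_eq_coe_iff]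
      rw [key Qs hQsPMF hQs1 hQs2]
      have hlogsum : ∑ x, Qs x * Real.log (Qs x / R x) = - Real.log Z := by
        have : ∀ x ∈ Finset.univ, Qs x * Real.log (Qs x / R x) = Qs x * (- Real.log Z) := by
          intro x _
          rcases lt_or_eq_of_le (hQsnn x) with hq | hq
          · have hs := hQsS x hq
            have hRx : 0 < R x := by
              have := hs.1; have := hs.2; rw [hR]; positivity
            have hQsx : Qs x = R x / Z := by simp only [hQs]; rw [if_pos hs]
            have : Qs x / R x = Z⁻¹ := by
              rw [hQsx]; field_simp
            rw [this, Real.log_inv]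
          · rw [← hq, zero_mul, zero_mul]
        rw [Finset.sum_congr rfl this, ← Finset.sum_mul, hQssum, one_mul]
      rw [hlogsum]
      have hne : (1:ℝ) - α ≠ 0 := h1α.ne'
      have hne2 : α - 1 ≠ 0 := by intro h; apply hne; linarith
      field_simp [hne, hne2]
      ring
    · -- lower bound
      rintro v ⟨Q, hQ, hQ1, rfl⟩
      by_cases hQ2 : ∀ x, 0 < Q x → 0 < P2 x
      · have h1 : klDiv Q P1 = ((∑ x, Q x * Real.log (Q x / P1 x) : ℝ) : EReal) := by
          unfold klDiv; rw [if_pos hQ1]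
        have h2 : klDiv Q P2 = ((∑ x, Q x * Real.log (Q x / P2 x) : ℝ) : EReal) := by
          unfold klDiv; rw [if_pos hQ2]
        rw [h1, h2, ← EReal.coe_mul, ← EReal.coe_add, EReal.coe_le_coe_iff]
        rw [key Q hQ hQ1 hQ2]
        have := gibbs Q hQ hQ1 hQ2
        have h1α' : (0:ℝ) < 1 / (1 - α) := by positivity
        have hne : (1:ℝ) - α ≠ 0 := h1α.ne'
        have hne2 : α - 1 ≠ 0 := by intro h; apply hne; linarith
        calc (1 / (α - 1)) * Real.log Z = (1 / (1 - α)) * (- Real.log Z) := by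
              field_simp [hne, hne2]; ring
          _ ≤ (1 / (1 - α)) * ∑ x, Q x * Real.log (Q x / R x) :=
              mul_le_mul_of_nonneg_left this (le_of_lt h1α')
      · have h2 : klDiv Q P2 = ⊤ := by
          unfold klDiv; rw [if_neg hQ2]
        have h1 : klDiv Q P1 = ((∑ x, Q x * Real.log (Q x / P1 x) : ℝ) : EReal) := by
          unfold klDiv; rw [if_pos hQ1]
        rw [h1, h2, ← EReal.coe_mul, EReal.coe_add_top]
        exact le_top
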